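/- For every n ≥ 2, the number of Riordan partitions of the set {1,…,n} equals the Riordan number Rₙ. -/

import Mathlib

/- The number of Riordan partitions of {1,…,n} equals the Riordan number Rₙ,
   for every n ≥ 2.  A Riordan partition is a set partition of {1,…,n}
   (modelled as Fin n) in which every block has at least two elements and
   which is non-crossing.  The Riordan numbers are quantified via their
   defining recurrence. -/

noncomputable section

/-- `P` is a set partition of `Fin n` all of whose blocks have at least two
elements: every point lies in a unique block of `P`. -/
def IsPartitionGe2 (n : ℕ) (P : Finset (Finset (Fin n))) : Prop :=
  (∀ i : Fin n, ∃! B, B ∈ P ∧ i ∈ B) ∧ (∀ B ∈ P, 2 ≤ B.card)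

/-- `P` is non-crossing: there are no i < j < k < l with i, k in one block and
j, l in a different block. -/
def IsNonCrossing (n : ℕ) (P : Finset (Finset (Fin n))) : Prop :=
  ¬ ∃ i j k l : Fin n, i < j ∧ j < k ∧ k < l ∧
      ∃ B ∈ P, ∃ C ∈ P, B ≠ C ∧ i ∈ B ∧ k ∈ B ∧ j ∈ C ∧ l ∈ C

/-- A Riordan partition: every block has at least two elements, non-crossing. -/
def IsRiordanPartition (n : ℕ) (P : Finset (Finset (Fin n))) : Prop :=
  IsPartitionGe2 n P ∧ IsNonCrossing n P


open Finset

namespace Rio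

/-- crossing pattern: i<j<k<l with i,k ∈ B, j,l ∈ C -/
def XP (B C : Finset ℕ) : Prop :=
  ∃ i j k l : ℕ, i < j ∧ j < k ∧ k < l ∧ i ∈ B ∧ k ∈ B ∧ j ∈ C ∧ l ∈ C

def NC (P : Finset (Finset ℕ)) : Prop :=
  ∀ B ∈ P, ∀ C ∈ P, B ≠ C → ¬ XP B C

def Cov (S : Finset ℕ) (P : Finset (Finset ℕ)) : Prop :=
  ∀ x ∈ S, ∃! B, B ∈ P ∧ x ∈ B

def NRP (n : ℕ) (P : Finset (Finset ℕ)) : Prop :=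
  Cov (range n) P ∧ (∀ B ∈ P, 2 ≤ B.card ∧ B ⊆ range n) ∧ NC P

theorem Cov.eq {S P} (h : Cov S P) {x B C} (hx : x ∈ S) (hB : B ∈ P) (hxB : x ∈ B)
    (hC : C ∈ P) (hxC : x ∈ C) : B = C := by
  obtain ⟨D, -, hD⟩ := h x hx
  rw [hD B ⟨hB, hxB⟩, hD C ⟨hC, hxC⟩]

noncomputable def NRPs (n : ℕ) : Finset (Finset (Finset ℕ)) :=
  @Finset.filter _ (NRP n) (Classical.decPred _) ((range n).powerset.powerset)

theorem mem_NRPs {n P} : P ∈ NRPs n ↔ NRP n P := by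
  classical
  constructor
  · intro h; rw [NRPs] at h; exact (Finset.mem_filter.1 h).2
  · intro h
    rw [NRPs, Finset.mem_filter]
    refine ⟨?_, h⟩
    rw [mem_powerset]
    intro B hB
    rw [mem_powerset]
    exact (h.2.1 B hB).2

noncomputable def NRPbs (n : ℕ) : Finset (Finset (Finset ℕ)) :=
  (NRPs n).filter (fun P => ∃ B ∈ P, 0 ∈ B ∧ 1 ∈ B)

theorem mem_NRPbs {n P} : P ∈ NRPbs n ↔ NRP n P ∧ ∃ B ∈ P, 0 ∈ B ∧ 1 ∈ B := by
  classical
  rw [NRPbs]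
  constructor
  · intro h; exact ⟨mem_NRPs.1 (Finset.mem_filter.1 h).1, (Finset.mem_filter.1 h).2⟩
  · intro h; exact Finset.mem_filter.2 ⟨mem_NRPs.2 h.1, h.2⟩

noncomputable def aN (n : ℕ) : ℕ := (NRPs n).card
noncomputable def bN (n : ℕ) : ℕ := (NRPbs n).card

/-! ### relabelling machinery -/

def dn (e : ℕ → ℕ) (k : ℕ) (B : Finset ℕ) : Finset ℕ :=
  (range k).filter (fun t => e t ∈ B)

def pUp (e : ℕ → ℕ) (P : Finset (Finset ℕ)) : Finset (Finset ℕ) :=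
  P.image (fun B => B.image e)

def pDn (e : ℕ → ℕ) (k : ℕ) (P : Finset (Finset ℕ)) : Finset (Finset ℕ) :=
  P.image (dn e k)

theorem mem_dn {e k B t} : t ∈ dn e k B ↔ t < k ∧ e t ∈ B := by
  simp [dn]

theorem mem_pUp {e P D} : D ∈ pUp e P ↔ ∃ B ∈ P, B.image e = D := by
  simp [pUp]

theorem mem_pDn {e k P D} : D ∈ pDn e k P ↔ ∃ B ∈ P, dn e k B = D := by
  simp [pDn]

theorem up_dn {e : ℕ → ℕ} (he : Function.Injective e) {k B} (hB : B ⊆ range k) :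
    dn e k (B.image e) = B := by
  ext t
  simp only [mem_dn, Finset.mem_image]
  constructor
  · rintro ⟨-, s, hs, hst⟩; rwa [he hst] at hs
  · intro ht; exact ⟨mem_range.1 (hB ht), t, ht, rfl⟩

theorem dn_up {e : ℕ → ℕ} {k B} (hB : ∀ x ∈ B, ∃ t, t < k ∧ e t = x) :
    (dn e k B).image e = B := by
  ext x
  simp only [Finset.mem_image, mem_dn]
  constructor
  · rintro ⟨t, ⟨-, h⟩, rfl⟩; exact h
  · intro hx; obtain ⟨t, ht, rfl⟩ := hB x hx; exact ⟨t, ⟨ht, hx⟩, rfl⟩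

theorem card_dn {e : ℕ → ℕ} (he : Function.Injective e) {k B}
    (hB : ∀ x ∈ B, ∃ t, t < k ∧ e t = x) : (dn e k B).card = B.card := by
  have h := card_image_of_injective (dn e k B) he
  rw [dn_up hB] at h
  exact h.symm

theorem XP.mono {B C B' C' : Finset ℕ} (hB : B ⊆ B') (hC : C ⊆ C') (h : XP B C) : XP B' C' := by
  obtain ⟨i, j, k, l, h1, h2, h3, h4, h5, h6, h7⟩ := h
  exact ⟨i, j, k, l, h1, h2, h3, hB h4, hB h5, hC h6, hC h7⟩

theorem XP_image {e : ℕ → ℕ} (he : StrictMono e) {B C} (h : XP (B.image e) (C.image e)) :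
    XP B C := by
  obtain ⟨i, j, k, l, h1, h2, h3, h4, h5, h6, h7⟩ := h
  simp only [Finset.mem_image] at h4 h5 h6 h7
  obtain ⟨i, hi, rfl⟩ := h4; obtain ⟨k, hk, rfl⟩ := h5
  obtain ⟨j, hj, rfl⟩ := h6; obtain ⟨l, hl, rfl⟩ := h7
  exact ⟨i, j, k, l, he.lt_iff_lt.1 h1, he.lt_iff_lt.1 h2, he.lt_iff_lt.1 h3,
    hi, hk, hj, hl⟩

theorem XP_dn {e : ℕ → ℕ} (he : StrictMono e) {k B C} (h : XP (dn e k B) (dn e k C)) :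
    XP B C := by
  obtain ⟨i, j, k', l, h1, h2, h3, h4, h5, h6, h7⟩ := h
  rw [mem_dn] at h4 h5 h6 h7
  exact ⟨e i, e j, e k', e l, he h1, he h2, he h3, h4.2, h5.2, h6.2, h7.2⟩

theorem NC.subset {P Q} (hQ : Q ⊆ P) (h : NC P) : NC Q :=
  fun B hB C hC hne => h B (hQ hB) C (hQ hC) hne

theorem NC_up {e : ℕ → ℕ} (he : StrictMono e) {P} (h : NC P) : NC (pUp e P) := by
  rintro D hD E hE hne hx
  rw [mem_pUp] at hD hE
  obtain ⟨B, hB, rfl⟩ := hD; obtain ⟨C, hC, rfl⟩ := hE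
  exact h B hB C hC (fun hBC => hne (by rw [hBC])) (XP_image he hx)

theorem NC_dn {e : ℕ → ℕ} (he : StrictMono e) {k P} (h : NC P) : NC (pDn e k P) := by
  rintro D hD E hE hne hx
  rw [mem_pDn] at hD hE
  obtain ⟨B, hB, rfl⟩ := hD; obtain ⟨C, hC, rfl⟩ := hE
  exact h B hB C hC (fun hBC => hne (by rw [hBC])) (XP_dn he hx)

theorem NC_shrink {P} {f : Finset ℕ → Finset ℕ} (hf : ∀ B ∈ P, f B ⊆ B) (h : NC P) :
    NC (P.image f) := by
  rintro D hD E hE hne hx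
  rw [Finset.mem_image] at hD hE
  obtain ⟨B, hB, rfl⟩ := hD; obtain ⟨C, hC, rfl⟩ := hE
  exact h B hB C hC (fun hBC => hne (by rw [hBC])) (hx.mono (hf B hB) (hf C hC))

theorem NC_union {P Q} (hP : NC P) (hQ : NC Q)
    (hsep : ∀ B ∈ P, ∀ C ∈ Q, ¬ XP B C ∧ ¬ XP C B) : NC (P ∪ Q) := by
  rintro B hB C hC hne hx
  rw [Finset.mem_union] at hB hC
  rcases hB with hB | hB <;> rcases hC with hC | hC
  · exact hP B hB C hC hne hx
  · exact (hsep B hB C hC).1 hx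
  · exact (hsep C hC B hB).2 hx
  · exact hQ B hB C hC hne hx

theorem Cov_up {e : ℕ → ℕ} (he : Function.Injective e) {k P} (h : Cov (range k) P) :
    Cov ((range k).image e) (pUp e P) := by
  rintro x hx
  rw [Finset.mem_image] at hx
  obtain ⟨t, ht, rfl⟩ := hx
  obtain ⟨B, ⟨hB, htB⟩, huniq⟩ := h t ht
  refine ⟨B.image e, ⟨mem_pUp.2 ⟨B, hB, rfl⟩, Finset.mem_image_of_mem e htB⟩, ?_⟩
  rintro D ⟨hD, hxD⟩
  rw [mem_pUp] at hD
  obtain ⟨C, hC, rfl⟩ := hD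
  rw [Finset.mem_image] at hxD
  obtain ⟨s, hs, hst⟩ := hxD
  rw [he hst] at hs
  rw [huniq C ⟨hC, hs⟩]

theorem Cov_dn {e : ℕ → ℕ} {k S P} (h : Cov S P) (h2 : ∀ t, t < k → e t ∈ S) :
    Cov (range k) (pDn e k P) := by
  intro t ht
  rw [mem_range] at ht
  obtain ⟨B, ⟨hB, htB⟩, huniq⟩ := h (e t) (h2 t ht)
  refine ⟨dn e k B, ⟨mem_pDn.2 ⟨B, hB, rfl⟩, mem_dn.2 ⟨ht, htB⟩⟩, ?_⟩
  rintro D ⟨hD, hxD⟩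
  rw [mem_pDn] at hD
  obtain ⟨C, hC, rfl⟩ := hD
  rw [mem_dn] at hxD
  rw [huniq C ⟨hC, hxD.2⟩]

theorem Cov_union {S T P Q} (hP : Cov S P) (hQ : Cov T Q)
    (hPS : ∀ B ∈ P, B ⊆ S) (hQT : ∀ C ∈ Q, C ⊆ T) (hd : Disjoint S T) :
    Cov (S ∪ T) (P ∪ Q) := by
  intro x hx
  rw [Finset.mem_union] at hx
  rcases hx with hx | hx
  · obtain ⟨B, ⟨hB, hxB⟩, huniq⟩ := hP x hx
    refine ⟨B, ⟨Finset.mem_union_left _ hB, hxB⟩, ?_⟩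
    rintro D ⟨hD, hxD⟩
    rw [Finset.mem_union] at hD
    rcases hD with hD | hD
    · exact huniq D ⟨hD, hxD⟩
    · exact absurd (hQT D hD hxD) (Finset.disjoint_left.1 hd hx)
  · obtain ⟨B, ⟨hB, hxB⟩, huniq⟩ := hQ x hx
    refine ⟨B, ⟨Finset.mem_union_right _ hB, hxB⟩, ?_⟩
    rintro D ⟨hD, hxD⟩
    rw [Finset.mem_union] at hD
    rcases hD with hD | hD
    · exact absurd hx (Finset.disjoint_left.1 hd (hPS D hD hxD))
    · exact huniq D ⟨hD, hxD⟩

theorem pDn_pUp {e : ℕ → ℕ} (he : Function.Injective e) {k P}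
    (hP : ∀ B ∈ P, B ⊆ range k) : pDn e k (pUp e P) = P := by
  rw [pDn, pUp, Finset.image_image]
  refine Eq.trans (Finset.image_congr ?_) Finset.image_id
  intro B hB
  exact up_dn he (hP B hB)

theorem pUp_pDn {e : ℕ → ℕ} {k P}
    (hP : ∀ B ∈ P, ∀ x ∈ B, ∃ t, t < k ∧ e t = x) : pUp e (pDn e k P) = P := by
  rw [pDn, pUp, Finset.image_image]
  refine Eq.trans (Finset.image_congr ?_) Finset.image_id
  intro B hB
  exact dn_up (hP B hB)



theorem strictMono_add (c : ℕ) : StrictMono (fun t : ℕ => t + c) := by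
  intro a b h; simpa using h

theorem image_range_add (k c : ℕ) : (range k).image (fun t => t + c) = Ico c (k + c) := by
  ext x
  simp only [Finset.mem_image, mem_range, mem_Ico]
  constructor
  · rintro ⟨t, ht, rfl⟩; omega
  · intro hx; exact ⟨x - c, by omega, by omega⟩

theorem mem_pair01 {x : ℕ} : x ∈ ({0, 1} : Finset ℕ) ↔ x = 0 ∨ x = 1 := by
  simp

/-- blocks of a Riordan set-partition other than the pair-block `{0,1}`
avoid `0` and `1` -/
theorem block_ge2 {m : ℕ} {P : Finset (Finset ℕ)} (h : NRP m P)
    (hp : ({0, 1} : Finset ℕ) ∈ P) {B : Finset ℕ} (hB : B ∈ P.erase {0, 1}) :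
    ∀ x ∈ B, ∃ t, t < m - 2 ∧ t + 2 = x := by
  intro x hx
  have hBP : B ∈ P := Finset.mem_of_mem_erase hB
  have hBne : B ≠ ({0, 1} : Finset ℕ) := Finset.ne_of_mem_erase hB
  have hxm : x < m := mem_range.1 ((h.2.1 B hBP).2 hx)
  have hx2 : 2 ≤ x := by
    by_contra hc
    have hx01 : x ∈ ({0, 1} : Finset ℕ) := mem_pair01.2 (by omega)
    exact hBne (h.1.eq (mem_range.2 hxm) hBP hx hp hx01)
  exact ⟨x - 2, by omega, by omega⟩

theorem S1_card {m : ℕ} :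
    ((NRPbs (m + 2)).filter (fun P => ({0, 1} : Finset ℕ) ∈ P)).card = aN m := by
  rw [aN]
  apply Finset.card_nbij' (fun P => pDn (fun t => t + 2) m (P.erase {0, 1}))
    (fun Q => insert ({0, 1} : Finset ℕ) (pUp (fun t => t + 2) Q))
  · -- forward membership
    intro P hP
    rw [Finset.mem_coe, Finset.mem_filter] at hP
    obtain ⟨hPb, hp⟩ := hP
    obtain ⟨hN, -⟩ := mem_NRPbs.1 hPb
    have hsub : ∀ B ∈ P.erase {0,1}, ∀ x ∈ B, ∃ t, t < m + 2 - 2 ∧ t + 2 = x :=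
      fun B hB => block_ge2 hN hp hB
    rw [Finset.mem_coe, mem_NRPs]
    have hcovE : Cov (Ico 2 (m + 2)) (P.erase {0, 1}) := by
      intro x hx
      rw [mem_Ico] at hx
      obtain ⟨B, ⟨hB, hxB⟩, huniq⟩ := hN.1 x (mem_range.2 hx.2)
      have hBne : B ≠ ({0, 1} : Finset ℕ) := by
        intro hc
        rw [hc] at hxB
        rw [mem_pair01] at hxB
        omega
      exact ⟨B, ⟨Finset.mem_erase.2 ⟨hBne, hB⟩, hxB⟩,
        fun D hD => huniq D ⟨Finset.mem_of_mem_erase hD.1, hD.2⟩⟩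
    refine ⟨?_, ?_, ?_⟩
    · apply Cov_dn hcovE
      intro t ht
      rw [mem_Ico]
      omega
    · intro D hD
      rw [mem_pDn] at hD
      obtain ⟨B, hB, rfl⟩ := hD
      have h2 : ∀ x ∈ B, ∃ t, t < m ∧ t + 2 = x := by
        intro x hx
        obtain ⟨t, ht, h⟩ := hsub B hB x hx
        exact ⟨t, by omega, h⟩
      constructor
      · rw [card_dn (strictMono_add 2).injective h2]
        exact (hN.2.1 B (Finset.mem_of_mem_erase hB)).1
      · intro t ht
        rw [mem_dn] at ht
        exact mem_range.2 ht.1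
    · exact NC_dn (strictMono_add 2) (hN.2.2.subset (Finset.erase_subset _ _))
  · -- backward membership
    intro Q hQ
    rw [Finset.mem_coe, mem_NRPs] at hQ
    rw [Finset.mem_coe, Finset.mem_filter]
    have hup : ∀ D ∈ pUp (fun t => t + 2) Q, D ⊆ Ico 2 (m + 2) := by
      intro D hD
      rw [mem_pUp] at hD
      obtain ⟨B, hB, rfl⟩ := hD
      rw [← image_range_add m 2]
      exact Finset.image_subset_image (hQ.2.1 B hB).2
    have hrange : range (m + 2) = ({0, 1} : Finset ℕ) ∪ Ico 2 (m + 2) := by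
      ext x
      simp only [mem_range, Finset.mem_union, mem_pair01, mem_Ico]
      omega
    refine ⟨mem_NRPbs.2 ⟨⟨?_, ?_, ?_⟩, ?_⟩, Finset.mem_insert_self _ _⟩
    · beta_reduce
      rw [hrange, Finset.insert_eq ({0, 1} : Finset ℕ) (pUp (fun t => t + 2) Q)]
      apply Cov_union
      · intro x hx
        exact ⟨{0, 1}, ⟨Finset.mem_singleton_self _, hx⟩,
          fun D hD => Finset.mem_singleton.1 hD.1⟩
      · have := Cov_up (strictMono_add 2).injective hQ.1
        rwa [image_range_add m 2] at this
      · intro B hB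
        rw [Finset.mem_singleton] at hB
        rw [hB]
      · exact hup
      · rw [Finset.disjoint_left]
        intro x hx hx2
        rw [mem_pair01] at hx
        rw [mem_Ico] at hx2
        omega
    · intro B hB
      rcases Finset.mem_insert.1 hB with hB | hB
      · subst hB
        constructor
        · rw [Finset.card_insert_of_notMem (by simp), Finset.card_singleton]
        · intro x hx
          rw [mem_pair01] at hx
          rw [mem_range]
          omega
      · rw [mem_pUp] at hB
        obtain ⟨C, hC, rfl⟩ := hB
        constructor
        · rw [card_image_of_injective _ (strictMono_add 2).injective]
          exact (hQ.2.1 C hC).1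
        · intro x hx
          have := hup _ (mem_pUp.2 ⟨C, hC, rfl⟩) hx
          rw [mem_Ico] at this
          rw [mem_range]
          omega
    · beta_reduce
      rw [Finset.insert_eq ({0, 1} : Finset ℕ) (pUp (fun t => t + 2) Q)]
      apply NC_union
      · intro B hB C hC hne
        rw [Finset.mem_singleton] at hB hC
        exact absurd (hB.trans hC.symm) hne
      · exact NC_up (strictMono_add 2) hQ.2.2
      · intro B hB C hC
        rw [Finset.mem_singleton] at hB
        subst hB
        constructor
        · rintro ⟨i, j, k, l, h1, h2, h3, h4, h5, -, -⟩
          rw [mem_pair01] at h4 h5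
          omega
        · rintro ⟨i, j, k, l, h1, h2, h3, -, -, h6, h7⟩
          rw [mem_pair01] at h6 h7
          omega
    · exact ⟨{0, 1}, Finset.mem_insert_self _ _, by simp⟩
  · -- left inverse
    intro P hP
    rw [Finset.mem_coe, Finset.mem_filter] at hP
    obtain ⟨hPb, hp⟩ := hP
    obtain ⟨hN, -⟩ := mem_NRPbs.1 hPb
    beta_reduce
    rw [pUp_pDn (fun B hB x hx => by
      obtain ⟨t, ht, h⟩ := block_ge2 hN hp hB x hx
      exact ⟨t, by omega, h⟩)]
    exact Finset.insert_erase hp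
  · -- right inverse
    intro Q hQ
    rw [Finset.mem_coe, mem_NRPs] at hQ
    have hnm : ({0, 1} : Finset ℕ) ∉ pUp (fun t => t + 2) Q := by
      intro hc
      rw [mem_pUp] at hc
      obtain ⟨B, hB, hBc⟩ := hc
      have h0 : (0 : ℕ) ∈ B.image (fun t => t + 2) := by
        rw [hBc]; exact mem_pair01.2 (Or.inl rfl)
      rw [Finset.mem_image] at h0
      obtain ⟨t, -, ht⟩ := h0
      omega
    beta_reduce
    rw [Finset.erase_insert hnm,
      pDn_pUp (strictMono_add 2).injective (fun B hB => (hQ.2.1 B hB).2)]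

/-! ### second piece: partitions where the block of 0 is bigger than {0,1} -/

def gI (B : Finset ℕ) : Finset ℕ := if 1 ∈ B then insert 0 B else B

theorem g_mem {B : Finset ℕ} {x : ℕ} (hx : x ∈ B) : x ∈ gI B := by
  rw [gI]; split_ifs
  · exact Finset.mem_insert_of_mem hx
  · exact hx

theorem mem_g {B : Finset ℕ} {x : ℕ} (hx : x ∈ gI B) (hx0 : x ≠ 0) : x ∈ B := by
  rw [gI] at hx; split_ifs at hx
  · exact (Finset.mem_insert.1 hx).resolve_left hx0
  · exact hx

theorem zero_mem_g {B : Finset ℕ} (h0B : 0 ∉ B) (h : 0 ∈ gI B) :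
    1 ∈ B ∧ gI B = insert 0 B := by
  rw [gI] at h ⊢
  split_ifs at h ⊢ with h1
  · exact ⟨h1, rfl⟩
  · exact absurd h h0B


theorem S2_fwd {m : ℕ} {P : Finset (Finset ℕ)} (hN : NRP (m + 2) P)
    (hpair : ∃ B ∈ P, 0 ∈ B ∧ 1 ∈ B) (hnp : ({0, 1} : Finset ℕ) ∉ P) :
    NRP (m + 1) (pDn (fun t => t + 1) (m + 1) (P.image (fun B => B.erase 0))) := by
  obtain ⟨B0, hB0, h00, h10⟩ := hpair
  have hE_sub : ∀ D ∈ P.image (fun B => B.erase 0), ∀ x ∈ D, ∃ t, t < m + 1 ∧ t + 1 = x := by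
    intro D hD x hx
    rw [Finset.mem_image] at hD
    obtain ⟨B, hB, rfl⟩ := hD
    obtain ⟨hx0, hxB⟩ := Finset.mem_erase.1 hx
    have := mem_range.1 ((hN.2.1 B hB).2 hxB)
    exact ⟨x - 1, by omega, by omega⟩
  have hcovE : Cov (Ico 1 (m + 2)) (P.image (fun B => B.erase 0)) := by
    intro x hx
    rw [mem_Ico] at hx
    obtain ⟨B, ⟨hB, hxB⟩, hu⟩ := hN.1 x (mem_range.2 hx.2)
    refine ⟨B.erase 0, ⟨Finset.mem_image_of_mem _ hB,
      Finset.mem_erase.2 ⟨by omega, hxB⟩⟩, ?_⟩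
    rintro D ⟨hD, hxD⟩
    rw [Finset.mem_image] at hD
    obtain ⟨C, hC, rfl⟩ := hD
    rw [hu C ⟨hC, (Finset.mem_erase.1 hxD).2⟩]
  refine ⟨?_, ?_, ?_⟩
  · apply Cov_dn hcovE
    intro t ht
    rw [mem_Ico]
    omega
  · intro D hD
    rw [mem_pDn] at hD
    obtain ⟨B, hB, rfl⟩ := hD
    constructor
    · rw [card_dn (strictMono_add 1).injective (hE_sub B hB)]
      rw [Finset.mem_image] at hB
      obtain ⟨C, hC, rfl⟩ := hB
      by_cases h0C : 0 ∈ C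
      · have hCB0 : C = B0 := hN.1.eq (mem_range.2 (by omega)) hC h0C hB0 h00
        have h1C : 1 ∈ C := by rw [hCB0]; exact h10
        have h3 : 3 ≤ C.card := by
          by_contra hc
          push_neg at hc
          have hsub : ({0, 1} : Finset ℕ) ⊆ C := by
            intro x hx
            rw [mem_pair01] at hx
            rcases hx with rfl | rfl
            · exact h0C
            · exact h1C
          have heq := Finset.eq_of_subset_of_card_le hsub
            (by rw [Finset.card_pair (by omega : (0 : ℕ) ≠ 1)]; omega)
          exact hnp (by rw [heq]; exact hC)
        rw [Finset.card_erase_of_mem h0C]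
        omega
      · rw [Finset.erase_eq_of_notMem h0C]
        exact (hN.2.1 C hC).1
    · intro t ht
      rw [mem_dn] at ht
      exact mem_range.2 ht.1
  · exact NC_dn (strictMono_add 1)
      (NC_shrink (fun B _ => Finset.erase_subset _ _) hN.2.2)

theorem S2_bwd {m : ℕ} {Q : Finset (Finset ℕ)} (hQ : NRP (m + 1) Q) :
    NRP (m + 2) ((pUp (fun t => t + 1) Q).image gI) ∧
      (∃ B ∈ (pUp (fun t => t + 1) Q).image gI, 0 ∈ B ∧ 1 ∈ B) ∧
      ({0, 1} : Finset ℕ) ∉ (pUp (fun t => t + 1) Q).image gI := by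
  set P' := pUp (fun t => t + 1) Q with hP'
  have hP'sub : ∀ B ∈ P', B ⊆ Ico 1 (m + 2) := by
    intro B hB
    rw [hP', mem_pUp] at hB
    obtain ⟨C, hC, rfl⟩ := hB
    rw [← image_range_add (m + 1) 1]
    exact Finset.image_subset_image (hQ.2.1 C hC).2
  have hP'cov : Cov (Ico 1 (m + 2)) P' := by
    have := Cov_up (strictMono_add 1).injective hQ.1
    rwa [image_range_add (m + 1) 1] at this
  have hP'card : ∀ B ∈ P', 2 ≤ B.card := by
    intro B hB
    rw [hP', mem_pUp] at hB
    obtain ⟨C, hC, rfl⟩ := hB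
    rw [card_image_of_injective _ (strictMono_add 1).injective]
    exact (hQ.2.1 C hC).1
  have hA : ∃ A ∈ P', 1 ∈ A := by
    obtain ⟨A0, ⟨hA0, h0A0⟩, -⟩ := hQ.1 0 (mem_range.2 (by omega))
    exact ⟨A0.image (fun t => t + 1), mem_pUp.2 ⟨A0, hA0, rfl⟩,
      Finset.mem_image.2 ⟨0, h0A0, rfl⟩⟩
  obtain ⟨A, hA1, h1A⟩ := hA
  have h0nB : ∀ B ∈ P', 0 ∉ B := by
    intro B hB hc
    have := hP'sub B hB hc
    rw [mem_Ico] at this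
    omega
  refine ⟨⟨?_, ?_, ?_⟩, ?_, ?_⟩
  · -- Cov
    intro x hx
    rw [mem_range] at hx
    by_cases hx0 : x = 0
    · subst hx0
      refine ⟨gI A, ⟨Finset.mem_image_of_mem _ hA1, by
        rw [gI, if_pos h1A]; exact Finset.mem_insert_self _ _⟩, ?_⟩
      rintro D ⟨hD, h0D⟩
      rw [Finset.mem_image] at hD
      obtain ⟨C, hC, rfl⟩ := hD
      have h1C : 1 ∈ C := (zero_mem_g (h0nB C hC) h0D).1
      rw [hP'cov.eq (mem_Ico.2 ⟨le_refl 1, by omega⟩) hC h1C hA1 h1A]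
    · obtain ⟨B, ⟨hB, hxB⟩, hu⟩ := hP'cov x (mem_Ico.2 ⟨by omega, hx⟩)
      refine ⟨gI B, ⟨Finset.mem_image_of_mem _ hB, g_mem hxB⟩, ?_⟩
      rintro D ⟨hD, hxD⟩
      rw [Finset.mem_image] at hD
      obtain ⟨C, hC, rfl⟩ := hD
      rw [hu C ⟨hC, mem_g hxD hx0⟩]
  · -- blocks
    intro D hD
    rw [Finset.mem_image] at hD
    obtain ⟨C, hC, rfl⟩ := hD
    constructor
    · calc 2 ≤ C.card := hP'card C hC
        _ ≤ (gI C).card := Finset.card_le_card (fun x hx => g_mem hx)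
    · intro x hx
      rw [mem_range]
      by_cases hx0 : x = 0
      · omega
      · have := hP'sub C hC (mem_g hx hx0)
        rw [mem_Ico] at this
        omega
  · -- noncrossing
    rintro D hD E hE hne ⟨i, j, k, l, h1, h2, h3, hiD, hkD, hjE, hlE⟩
    rw [Finset.mem_image] at hD hE
    obtain ⟨B, hB, rfl⟩ := hD
    obtain ⟨C, hC, rfl⟩ := hE
    have hBC : B ≠ C := fun h => hne (by rw [h])
    have hNC' : NC P' := NC_up (strictMono_add 1) hQ.2.2
    by_cases hi0 : i = 0
    · subst hi0
      have h1B : 1 ∈ B := (zero_mem_g (h0nB B hB) hiD).1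
      have hkB : k ∈ B := mem_g hkD (by omega)
      have hjC : j ∈ C := mem_g hjE (by omega)
      have hlC : l ∈ C := mem_g hlE (by omega)
      by_cases hj1 : j = 1
      · subst hj1
        exact hBC (hP'cov.eq (mem_Ico.2 ⟨le_refl 1, by omega⟩) hB h1B hC hjC)
      · exact hNC' B hB C hC hBC ⟨1, j, k, l, by omega, h2, h3, h1B, hkB, hjC, hlC⟩
    · exact hNC' B hB C hC hBC ⟨i, j, k, l, h1, h2, h3, mem_g hiD hi0,
        mem_g hkD (by omega), mem_g hjE (by omega), mem_g hlE (by omega)⟩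
  · -- pair block
    refine ⟨gI A, Finset.mem_image_of_mem _ hA1, ?_, g_mem h1A⟩
    rw [gI, if_pos h1A]
    exact Finset.mem_insert_self _ _
  · -- {0,1} not a block
    intro hc
    rw [Finset.mem_image] at hc
    obtain ⟨C, hC, hgC⟩ := hc
    have hCsub : C ⊆ {1} := by
      intro x hx
      have hxp : x ∈ ({0, 1} : Finset ℕ) := by rw [← hgC]; exact g_mem hx
      rw [mem_pair01] at hxp
      have hx0 : x ≠ 0 := fun h => h0nB C hC (h ▸ hx)
      rw [Finset.mem_singleton]
      omega
    have := Finset.card_le_card hCsub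
    rw [Finset.card_singleton] at this
    have := hP'card C hC
    omega

theorem S2_card {m : ℕ} :
    ((NRPbs (m + 2)).filter (fun P => ({0, 1} : Finset ℕ) ∉ P)).card = aN (m + 1) := by
  rw [aN]
  apply Finset.card_nbij'
    (fun P => pDn (fun t => t + 1) (m + 1) (P.image (fun B => B.erase 0)))
    (fun Q => (pUp (fun t => t + 1) Q).image gI)
  · intro P hP
    rw [Finset.mem_coe, Finset.mem_filter] at hP
    obtain ⟨hPb, hp⟩ := hP
    obtain ⟨hN, hpair⟩ := mem_NRPbs.1 hPb
    exact mem_NRPs.2 (S2_fwd hN hpair hp)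
  · intro Q hQ
    rw [Finset.mem_coe, mem_NRPs] at hQ
    obtain ⟨h1, h2, h3⟩ := S2_bwd hQ
    rw [Finset.mem_coe, Finset.mem_filter]
    exact ⟨mem_NRPbs.2 ⟨h1, h2⟩, h3⟩
  · -- left inverse
    intro P hP
    rw [Finset.mem_coe, Finset.mem_filter] at hP
    obtain ⟨hPb, hp⟩ := hP
    obtain ⟨hN, hpair⟩ := mem_NRPbs.1 hPb
    obtain ⟨B0, hB0, h00, h10⟩ := hpair
    have hE_sub : ∀ D ∈ P.image (fun B => B.erase 0), ∀ x ∈ D, ∃ t, t < m + 1 ∧ t + 1 = x := by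
      intro D hD x hx
      rw [Finset.mem_image] at hD
      obtain ⟨B, hB, rfl⟩ := hD
      obtain ⟨hx0, hxB⟩ := Finset.mem_erase.1 hx
      have := mem_range.1 ((hN.2.1 B hB).2 hxB)
      exact ⟨x - 1, by omega, by omega⟩
    beta_reduce
    rw [pUp_pDn hE_sub, Finset.image_image]
    refine Eq.trans (Finset.image_congr ?_) Finset.image_id
    intro B hB
    show gI (B.erase 0) = B
    by_cases h0B : 0 ∈ B
    · have hBB0 : B = B0 := hN.1.eq (mem_range.2 (by omega)) hB h0B hB0 h00
      have h1B : 1 ∈ B.erase 0 := Finset.mem_erase.2 ⟨by omega, by rw [hBB0]; exact h10⟩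
      rw [gI, if_pos h1B]
      exact Finset.insert_erase h0B
    · have h1B : 1 ∉ B := by
        intro h1B
        have hBB0 : B = B0 := hN.1.eq (mem_range.2 (by omega)) hB h1B hB0 h10
        exact h0B (by rw [hBB0]; exact h00)
      rw [Finset.erase_eq_of_notMem h0B, gI, if_neg h1B]
  · -- right inverse
    intro Q hQ
    rw [Finset.mem_coe, mem_NRPs] at hQ
    have h0nB : ∀ B ∈ pUp (fun t => t + 1) Q, 0 ∉ B := by
      intro B hB hc
      rw [mem_pUp] at hB
      obtain ⟨C, hC, rfl⟩ := hB
      rw [Finset.mem_image] at hc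
      obtain ⟨t, -, ht⟩ := hc
      omega
    beta_reduce
    rw [Finset.image_image]
    have : (pUp (fun t => t + 1) Q).image ((fun B => B.erase 0) ∘ gI)
        = pUp (fun t => t + 1) Q := by
      refine Eq.trans (Finset.image_congr ?_) Finset.image_id
      intro B hB
      show (gI B).erase 0 = B
      rw [gI]
      split_ifs
      · exact Finset.erase_insert (h0nB B hB)
      · exact Finset.erase_eq_of_notMem (h0nB B hB)
    rw [this, pDn_pUp (strictMono_add 1).injective (fun B hB => (hQ.2.1 B hB).2)]

theorem bN_rec (m : ℕ) : bN (m + 2) = aN m + aN (m + 1) := by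
  rw [bN, ← Finset.card_filter_add_card_filter_not
    (p := fun P => ({0, 1} : Finset ℕ) ∈ P), S1_card, S2_card]


/-! ### decomposition by the second element of the block of 0 -/

noncomputable def secondOf (P : Finset (Finset ℕ)) : ℕ :=
  sInf {m | m ≠ 0 ∧ ∃ B ∈ P, 0 ∈ B ∧ m ∈ B}

theorem secondOf_def (P : Finset (Finset ℕ)) :
    secondOf P = sInf {m | m ≠ 0 ∧ ∃ B ∈ P, 0 ∈ B ∧ m ∈ B} := rfl

def ej (j t : ℕ) : ℕ := if t = 0 then 0 else t + j - 1

theorem ej_strictMono {j : ℕ} (hj : 1 ≤ j) : StrictMono (ej j) := by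
  intro a b h
  simp only [ej]
  split_ifs <;> omega

theorem image_range_ej {n j : ℕ} (hj1 : 1 ≤ j) (hj2 : j < n + 2) :
    (range (n + 3 - j)).image (ej j) = insert 0 (Ico j (n + 2)) := by
  ext x
  simp only [Finset.mem_image, mem_range, Finset.mem_insert, mem_Ico, ej]
  constructor
  · rintro ⟨t, ht, rfl⟩
    split_ifs with h
    · exact Or.inl rfl
    · right; omega
  · rintro (rfl | hx)
    · exact ⟨0, by omega, by simp⟩
    · exact ⟨x - j + 1, by omega, by
        simp only [if_neg (by omega : ¬(x - j + 1 = 0))]; omega⟩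

theorem Ico_one_eq_Ioo (j : ℕ) : Ico 1 j = Ioo 0 j := by
  ext x
  simp only [mem_Ico, mem_Ioo]
  omega

theorem second_spec {n : ℕ} {P : Finset (Finset ℕ)} (hN : NRP n P) (hn : 1 ≤ n) :
    ∃ B0 ∈ P, 0 ∈ B0 ∧ secondOf P ∈ B0 ∧ secondOf P ≠ 0 ∧
      ∀ x ∈ B0, x ≠ 0 → secondOf P ≤ x := by
  obtain ⟨B0, ⟨hB0, h00⟩, hu⟩ := hN.1 0 (mem_range.2 hn)
  have h2 := (hN.2.1 B0 hB0).1
  have h2' : 1 < B0.card := by omega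
  obtain ⟨a, ha, b, hb, hab⟩ := Finset.one_lt_card.1 h2'
  have hex : ∃ m, m ≠ 0 ∧ ∃ B ∈ P, 0 ∈ B ∧ m ∈ B := by
    rcases eq_or_ne a 0 with rfl | ha0
    · exact ⟨b, Ne.symm hab, B0, hB0, h00, hb⟩
    · exact ⟨a, ha0, B0, hB0, h00, ha⟩
  obtain ⟨hne, B, hB, h0B, hjB⟩ := Nat.sInf_mem hex
  have hBB0 : B = B0 := hN.1.eq (mem_range.2 hn) hB h0B hB0 h00
  rw [hBB0] at hjB
  exact ⟨B0, hB0, h00, hjB, hne,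
    fun x hx hx0 => Nat.sInf_le ⟨hx0, B0, hB0, h00, hx⟩⟩

theorem block_split {n : ℕ} {P : Finset (Finset ℕ)} (hN : NRP n P) {B0 : Finset ℕ} {j : ℕ}
    (hB0 : B0 ∈ P) (h00 : 0 ∈ B0) (hjB : j ∈ B0) (hj0 : j ≠ 0)
    (hjmin : ∀ x ∈ B0, x ≠ 0 → j ≤ x) :
    ∀ B ∈ P, B ⊆ Ioo 0 j ∨ ∀ x ∈ B, x = 0 ∨ j ≤ x := by
  intro B hB
  by_cases hBB0 : B = B0
  · subst hBB0
    right
    intro x hx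
    rcases eq_or_ne x 0 with rfl | hx0
    · exact Or.inl rfl
    · exact Or.inr (hjmin x hx hx0)
  · by_contra hc
    push_neg at hc
    obtain ⟨h1, y, hyB, hy0, hyj⟩ := hc
    obtain ⟨z, hzB, hz⟩ := Finset.not_subset.1 h1
    rw [mem_Ioo] at hz
    push_neg at hz
    have hzn := mem_range.1 ((hN.2.1 B hB).2 hzB)
    rcases Nat.eq_zero_or_pos z with rfl | hzpos
    · exact hBB0 (hN.1.eq (mem_range.2 (by omega)) hB hzB hB0 h00)
    · have hjz : j ≤ z := hz hzpos
      rcases eq_or_lt_of_le hjz with rfl | hjz'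
      · exact hBB0 (hN.1.eq (mem_range.2 hzn) hB hzB hB0 hjB)
      · exact hN.2.2 B0 hB0 B hB (Ne.symm hBB0)
          ⟨0, y, j, z, by omega, by omega, hjz', h00, hjB, hyB, hzB⟩

theorem fiber_card {n j : ℕ} (hj1 : 1 ≤ j) (hj2 : j < n + 2) :
    ((NRPs (n + 2)).filter (fun P => secondOf P = j)).card
      = aN (j - 1) * bN (n + 3 - j) := by
  rw [aN, bN, ← Finset.card_product]
  apply Finset.card_nbij'
    (fun P => (pDn (fun t => t + 1) (j - 1) (P.filter (fun B => B ⊆ Ioo 0 j)),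
               pDn (ej j) (n + 3 - j) (P.filter (fun B => ¬ B ⊆ Ioo 0 j))))
    (fun QR => pUp (fun t => t + 1) QR.1 ∪ pUp (ej j) QR.2)
  · -- forward membership
    intro P hP
    rw [Finset.mem_coe, Finset.mem_filter] at hP
    obtain ⟨hPm, hsec⟩ := hP
    have hN := mem_NRPs.1 hPm
    obtain ⟨B0, hB0, h00, hjB0, hj0, hjmin⟩ := second_spec hN (by omega)
    rw [hsec] at hjB0 hj0 hjmin
    have hsplit := block_split hN hB0 h00 hjB0 hj0 hjmin
    have hgsub : ∀ B ∈ P.filter (fun B => B ⊆ Ioo 0 j), ∀ x ∈ B,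
        ∃ t, t < j - 1 ∧ t + 1 = x := by
      intro B hB x hx
      have := (Finset.mem_filter.1 hB).2 hx
      rw [mem_Ioo] at this
      exact ⟨x - 1, by omega, by omega⟩
    have hmT : ∀ B ∈ P.filter (fun B => ¬ B ⊆ Ioo 0 j), ∀ x ∈ B,
        x = 0 ∨ (j ≤ x ∧ x < n + 2) := by
      intro B hB x hx
      have hBP := (Finset.mem_filter.1 hB).1
      have hxn := mem_range.1 ((hN.2.1 B hBP).2 hx)
      rcases hsplit B hBP with h | h
      · exact absurd h (Finset.mem_filter.1 hB).2
      · rcases h x hx with h | h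
        · exact Or.inl h
        · exact Or.inr ⟨h, hxn⟩
    have hmsub : ∀ B ∈ P.filter (fun B => ¬ B ⊆ Ioo 0 j), ∀ x ∈ B,
        ∃ t, t < n + 3 - j ∧ ej j t = x := by
      intro B hB x hx
      rcases hmT B hB x hx with rfl | ⟨h1, h2⟩
      · exact ⟨0, by omega, by simp [ej]⟩
      · exact ⟨x - j + 1, by omega, by
          simp only [ej, if_neg (by omega : ¬(x - j + 1 = 0))]; omega⟩
    rw [Finset.mem_coe, Finset.mem_product]
    constructor
    · rw [mem_NRPs]
      have hgcov : Cov (Ioo 0 j) (P.filter (fun B => B ⊆ Ioo 0 j)) := by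
        intro x hx
        rw [mem_Ioo] at hx
        obtain ⟨B, ⟨hB, hxB⟩, hu⟩ := hN.1 x (mem_range.2 (by omega))
        have hBg : B ⊆ Ioo 0 j := by
          rcases hsplit B hB with h | h
          · exact h
          · rcases h x hxB with rfl | h
            · omega
            · omega
        exact ⟨B, ⟨Finset.mem_filter.2 ⟨hB, hBg⟩, hxB⟩,
          fun D hD => hu D ⟨(Finset.mem_filter.1 hD.1).1, hD.2⟩⟩
      refine ⟨?_, ?_, ?_⟩
      · apply Cov_dn hgcov
        intro t ht
        rw [mem_Ioo]
        omega
      · intro D hD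
        rw [mem_pDn] at hD
        obtain ⟨B, hB, rfl⟩ := hD
        refine ⟨?_, fun t ht => mem_range.2 (mem_dn.1 ht).1⟩
        rw [card_dn (strictMono_add 1).injective (hgsub B hB)]
        exact (hN.2.1 B (Finset.mem_filter.1 hB).1).1
      · exact NC_dn (strictMono_add 1) (hN.2.2.subset (Finset.filter_subset _ _))
    · rw [mem_NRPbs]
      have hmcov : Cov (insert 0 (Ico j (n + 2))) (P.filter (fun B => ¬ B ⊆ Ioo 0 j)) := by
        intro x hx
        have hxn : x < n + 2 := by
          rcases Finset.mem_insert.1 hx with rfl | h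
          · omega
          · exact (mem_Ico.1 h).2
        obtain ⟨B, ⟨hB, hxB⟩, hu⟩ := hN.1 x (mem_range.2 hxn)
        have hBm : ¬ B ⊆ Ioo 0 j := by
          intro hsub2
          have := hsub2 hxB
          rw [mem_Ioo] at this
          rcases Finset.mem_insert.1 hx with rfl | h
          · omega
          · have := (mem_Ico.1 h).1
            omega
        exact ⟨B, ⟨Finset.mem_filter.2 ⟨hB, hBm⟩, hxB⟩,
          fun D hD => hu D ⟨(Finset.mem_filter.1 hD.1).1, hD.2⟩⟩
      refine ⟨⟨?_, ?_, ?_⟩, ?_⟩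
      · apply Cov_dn hmcov
        intro t ht
        simp only [ej, Finset.mem_insert, mem_Ico]
        split_ifs <;> omega
      · intro D hD
        rw [mem_pDn] at hD
        obtain ⟨B, hB, rfl⟩ := hD
        refine ⟨?_, fun t ht => mem_range.2 (mem_dn.1 ht).1⟩
        rw [card_dn (ej_strictMono (by omega)).injective (hmsub B hB)]
        exact (hN.2.1 B (Finset.mem_filter.1 hB).1).1
      · exact NC_dn (ej_strictMono (by omega)) (hN.2.2.subset (Finset.filter_subset _ _))
      · have hB0m : B0 ∈ P.filter (fun B => ¬ B ⊆ Ioo 0 j) := by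
          refine Finset.mem_filter.2 ⟨hB0, fun hs => ?_⟩
          have := hs h00
          rw [mem_Ioo] at this
          omega
        refine ⟨dn (ej j) (n + 3 - j) B0, mem_pDn.2 ⟨B0, hB0m, rfl⟩, ?_, ?_⟩
        · rw [mem_dn]
          exact ⟨by omega, by simpa [ej] using h00⟩
        · rw [mem_dn]
          refine ⟨by omega, ?_⟩
          simp only [ej, if_neg (by omega : ¬(1 = 0))]
          have h11 : 1 + j - 1 = j := by omega
          rw [h11]
          exact hjB0
  · -- backward membership
    rintro ⟨Q, R⟩ hQR
    rw [Finset.mem_coe, Finset.mem_product] at hQR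
    obtain ⟨hQm, hRm⟩ := hQR
    rw [mem_NRPs] at hQm
    obtain ⟨hRN, hRp⟩ := mem_NRPbs.1 hRm
    obtain ⟨R0, hR0, h0R0, h1R0⟩ := hRp
    have hejm := ej_strictMono (show 1 ≤ j by omega)
    have hQsub : ∀ B ∈ pUp (fun t => t + 1) Q, B ⊆ Ioo 0 j := by
      intro B hB
      rw [mem_pUp] at hB
      obtain ⟨C, hC, rfl⟩ := hB
      intro x hx
      rw [Finset.mem_image] at hx
      obtain ⟨t, htC, rfl⟩ := hx
      have := mem_range.1 ((hQm.2.1 C hC).2 htC)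
      rw [mem_Ioo]
      omega
    have hRsub : ∀ B ∈ pUp (ej j) R, B ⊆ insert 0 (Ico j (n + 2)) := by
      intro B hB
      rw [mem_pUp] at hB
      obtain ⟨C, hC, rfl⟩ := hB
      intro x hx
      rw [Finset.mem_image] at hx
      obtain ⟨t, htC, rfl⟩ := hx
      have := mem_range.1 ((hRN.2.1 C hC).2 htC)
      simp only [ej, Finset.mem_insert, mem_Ico]
      split_ifs <;> omega
    have hcovQ : Cov (Ioo 0 j) (pUp (fun t => t + 1) Q) := by
      have h := Cov_up (strictMono_add 1).injective hQm.1
      rwa [image_range_add (j - 1) 1, show j - 1 + 1 = j by omega, Ico_one_eq_Ioo] at h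
    have hcovR : Cov (insert 0 (Ico j (n + 2))) (pUp (ej j) R) := by
      have h := Cov_up hejm.injective hRN.1
      rwa [image_range_ej (by omega) (by omega)] at h
    have hrange : range (n + 2) = Ioo 0 j ∪ insert 0 (Ico j (n + 2)) := by
      ext x
      simp only [mem_range, Finset.mem_union, mem_Ioo, Finset.mem_insert, mem_Ico]
      omega
    have hdisj : Disjoint (Ioo 0 j) (insert 0 (Ico j (n + 2))) := by
      rw [Finset.disjoint_left]
      intro x hx hx2
      rw [mem_Ioo] at hx
      rcases Finset.mem_insert.1 hx2 with rfl | h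
      · omega
      · rw [mem_Ico] at h
        omega
    rw [Finset.mem_coe, Finset.mem_filter]
    refine ⟨mem_NRPs.2 ⟨?_, ?_, ?_⟩, ?_⟩
    · rw [hrange]
      exact Cov_union hcovQ hcovR hQsub hRsub hdisj
    · intro B hB
      rcases Finset.mem_union.1 hB with hB | hB
      · rw [mem_pUp] at hB
        obtain ⟨C, hC, rfl⟩ := hB
        refine ⟨?_, ?_⟩
        · rw [card_image_of_injective _ (strictMono_add 1).injective]
          exact (hQm.2.1 C hC).1
        · intro x hx
          have := hQsub _ (mem_pUp.2 ⟨C, hC, rfl⟩) hx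
          rw [mem_Ioo] at this
          rw [mem_range]
          omega
      · rw [mem_pUp] at hB
        obtain ⟨C, hC, rfl⟩ := hB
        refine ⟨?_, ?_⟩
        · rw [card_image_of_injective _ hejm.injective]
          exact (hRN.2.1 C hC).1
        · intro x hx
          have := hRsub _ (mem_pUp.2 ⟨C, hC, rfl⟩) hx
          rcases Finset.mem_insert.1 this with rfl | h
          · rw [mem_range]; omega
          · rw [mem_Ico] at h
            rw [mem_range]
            omega
    · apply NC_union (NC_up (strictMono_add 1) hQm.2.2) (NC_up hejm hRN.2.2)
      intro B hB C hC
      have hBs := hQsub B hB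
      have hCs := hRsub C hC
      constructor
      · rintro ⟨i, j', k, l, h1, h2, h3, h4, h5, h6, h7⟩
        have hi := hBs h4
        have hk := hBs h5
        have hj' := hCs h6
        rw [mem_Ioo] at hi hk
        rcases Finset.mem_insert.1 hj' with rfl | h
        · omega
        · rw [mem_Ico] at h
          omega
      · rintro ⟨i, j', k, l, h1, h2, h3, h4, h5, h6, h7⟩
        have hj'B := hBs h6
        have hlB := hBs h7
        have hkC := hCs h5
        rw [mem_Ioo] at hj'B hlB
        rcases Finset.mem_insert.1 hkC with rfl | h
        · omega
        · rw [mem_Ico] at h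
          omega
    · show secondOf (pUp (fun t => t + 1) Q ∪ pUp (ej j) R) = j
      have hwit : (j : ℕ) ∈ {m | m ≠ 0 ∧ ∃ B ∈ pUp (fun t => t + 1) Q ∪ pUp (ej j) R,
          0 ∈ B ∧ m ∈ B} := by
        refine ⟨by omega, R0.image (ej j),
          Finset.mem_union_right _ (mem_pUp.2 ⟨R0, hR0, rfl⟩), ?_, ?_⟩
        · exact Finset.mem_image.2 ⟨0, h0R0, by simp [ej]⟩
        · exact Finset.mem_image.2 ⟨1, h1R0, by
            simp only [ej, if_neg one_ne_zero]; omega⟩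
      have hub : secondOf (pUp (fun t => t + 1) Q ∪ pUp (ej j) R) ≤ j := by
        rw [secondOf_def]
        exact Nat.sInf_le hwit
      have hmem := Nat.sInf_mem ⟨j, hwit⟩
      rw [← secondOf_def] at hmem
      obtain ⟨hm0, B, hB, h0B, hmB⟩ := hmem
      have hlb : j ≤ secondOf (pUp (fun t => t + 1) Q ∪ pUp (ej j) R) := by
        rcases Finset.mem_union.1 hB with hB | hB
        · have := hQsub B hB h0B
          rw [mem_Ioo] at this
          omega
        · have := hRsub B hB hmB
          rcases Finset.mem_insert.1 this with h | h
          · omega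
          · rw [mem_Ico] at h
            omega
      omega
  · -- left inverse
    intro P hP
    rw [Finset.mem_coe, Finset.mem_filter] at hP
    obtain ⟨hPm, hsec⟩ := hP
    have hN := mem_NRPs.1 hPm
    obtain ⟨B0, hB0, h00, hjB0, hj0, hjmin⟩ := second_spec hN (by omega)
    rw [hsec] at hjB0 hj0 hjmin
    have hsplit := block_split hN hB0 h00 hjB0 hj0 hjmin
    have hgsub : ∀ B ∈ P.filter (fun B => B ⊆ Ioo 0 j), ∀ x ∈ B,
        ∃ t, t < j - 1 ∧ t + 1 = x := by
      intro B hB x hx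
      have := (Finset.mem_filter.1 hB).2 hx
      rw [mem_Ioo] at this
      exact ⟨x - 1, by omega, by omega⟩
    have hmsub : ∀ B ∈ P.filter (fun B => ¬ B ⊆ Ioo 0 j), ∀ x ∈ B,
        ∃ t, t < n + 3 - j ∧ ej j t = x := by
      intro B hB x hx
      have hBP := (Finset.mem_filter.1 hB).1
      have hxn := mem_range.1 ((hN.2.1 B hBP).2 hx)
      rcases hsplit B hBP with h | h
      · exact absurd h (Finset.mem_filter.1 hB).2
      · rcases h x hx with rfl | h
        · exact ⟨0, by omega, by simp [ej]⟩
        · exact ⟨x - j + 1, by omega, by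
            simp only [ej, if_neg (by omega : ¬(x - j + 1 = 0))]; omega⟩
    show pUp _ (pDn _ _ _) ∪ pUp _ (pDn _ _ _) = P
    rw [pUp_pDn hgsub, pUp_pDn hmsub, Finset.filter_union_filter_not_eq]
  · -- right inverse
    rintro ⟨Q, R⟩ hQR
    rw [Finset.mem_coe, Finset.mem_product] at hQR
    obtain ⟨hQm, hRm⟩ := hQR
    rw [mem_NRPs] at hQm
    obtain ⟨hRN, -⟩ := mem_NRPbs.1 hRm
    have hejm := ej_strictMono (show 1 ≤ j by omega)
    have hQsub : ∀ B ∈ pUp (fun t => t + 1) Q, B ⊆ Ioo 0 j := by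
      intro B hB
      rw [mem_pUp] at hB
      obtain ⟨C, hC, rfl⟩ := hB
      intro x hx
      rw [Finset.mem_image] at hx
      obtain ⟨t, htC, rfl⟩ := hx
      have := mem_range.1 ((hQm.2.1 C hC).2 htC)
      rw [mem_Ioo]
      omega
    have hRsub : ∀ B ∈ pUp (ej j) R, B ⊆ insert 0 (Ico j (n + 2)) := by
      intro B hB
      rw [mem_pUp] at hB
      obtain ⟨C, hC, rfl⟩ := hB
      intro x hx
      rw [Finset.mem_image] at hx
      obtain ⟨t, htC, rfl⟩ := hx
      have := mem_range.1 ((hRN.2.1 C hC).2 htC)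
      simp only [ej, Finset.mem_insert, mem_Ico]
      split_ifs <;> omega
    have hnotsub : ∀ B ∈ pUp (ej j) R, ¬ B ⊆ Ioo 0 j := by
      intro B hB hsub2
      rw [mem_pUp] at hB
      obtain ⟨C, hC, rfl⟩ := hB
      have h2 : 2 ≤ C.card := (hRN.2.1 C hC).1
      obtain ⟨x, hx⟩ := Finset.card_pos.1 (show 0 < C.card by omega)
      have hx' : ej j x ∈ C.image (ej j) := Finset.mem_image_of_mem _ hx
      have h3 := hsub2 hx'
      rw [mem_Ioo] at h3
      have h4 := hRsub _ (mem_pUp.2 ⟨C, hC, rfl⟩) hx'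
      rcases Finset.mem_insert.1 h4 with h | h
      · omega
      · rw [mem_Ico] at h
        omega
    have hfilter1 : (pUp (fun t => t + 1) Q ∪ pUp (ej j) R).filter
        (fun B => B ⊆ Ioo 0 j) = pUp (fun t => t + 1) Q := by
      rw [Finset.filter_union, Finset.filter_true_of_mem hQsub,
        Finset.filter_false_of_mem hnotsub, Finset.union_empty]
    have hfilter2 : (pUp (fun t => t + 1) Q ∪ pUp (ej j) R).filter
        (fun B => ¬ B ⊆ Ioo 0 j) = pUp (ej j) R := by
      rw [Finset.filter_union,
        Finset.filter_false_of_mem (fun B hB => not_not_intro (hQsub B hB)),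
        Finset.filter_true_of_mem hnotsub, Finset.empty_union]
    show (pDn _ _ _, pDn _ _ _) = (Q, R)
    rw [hfilter1, hfilter2,
      pDn_pUp (strictMono_add 1).injective (fun B hB => (hQm.2.1 B hB).2),
      pDn_pUp hejm.injective (fun B hB => (hRN.2.1 B hB).2)]

theorem aN_rec (n : ℕ) :
    aN (n + 2) = ∑ i ∈ range (n + 1), aN i * bN (n + 2 - i) := by
  rw [aN, Finset.card_eq_sum_card_fiberwise
    (f := secondOf) (t := Ico 1 (n + 2)) (fun P hP => by
      have hN := mem_NRPs.1 hP
      obtain ⟨B0, hB0, h00, hjB0, hj0, -⟩ := second_spec hN (by omega)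
      have := mem_range.1 ((hN.2.1 B0 hB0).2 hjB0)
      rw [Finset.mem_coe, mem_Ico]
      omega)]
  have h1 : ∑ j ∈ Ico 1 (n + 2), ((NRPs (n + 2)).filter (fun P => secondOf P = j)).card
      = ∑ j ∈ Ico 1 (n + 2), aN (j - 1) * bN (n + 3 - j) :=
    Finset.sum_congr rfl (fun j hj => by rw [mem_Ico] at hj; exact fiber_card hj.1 hj.2)
  rw [h1, Finset.sum_Ico_eq_sum_range, show n + 2 - 1 = n + 1 by omega]
  refine Finset.sum_congr rfl ?_
  intro i hi
  rw [mem_range] at hi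
  rw [show 1 + i - 1 = i by omega, show n + 3 - (1 + i) = n + 2 - i by omega]


/-! ### base values -/

theorem NRP_empty : NRP 0 (∅ : Finset (Finset ℕ)) := by
  refine ⟨?_, ?_, ?_⟩
  · intro x hx
    rw [range_zero] at hx
    exact absurd hx (Finset.notMem_empty x)
  · intro B hB
    exact absurd hB (Finset.notMem_empty B)
  · intro B hB
    exact absurd hB (Finset.notMem_empty B)

theorem aN_zero : aN 0 = 1 := by
  rw [aN, show NRPs 0 = {∅} from ?_, Finset.card_singleton]
  ext P
  rw [mem_NRPs, Finset.mem_singleton]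
  constructor
  · intro h
    rw [Finset.eq_empty_iff_forall_notMem]
    intro B hB
    have h1 := (h.2.1 B hB).1
    have h2 := (h.2.1 B hB).2
    rw [range_zero, Finset.subset_empty] at h2
    rw [h2, Finset.card_empty] at h1
    omega
  · rintro rfl
    exact NRP_empty

theorem aN_one : aN 1 = 0 := by
  rw [aN, Finset.card_eq_zero, Finset.eq_empty_iff_forall_notMem]
  intro P hP
  have h := mem_NRPs.1 hP
  obtain ⟨B, ⟨hB, h0B⟩, -⟩ := h.1 0 (mem_range.2 (by omega))
  have h2 := (h.2.1 B hB).1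
  have h3 : B ⊆ {0} := by
    intro x hx
    have := mem_range.1 ((h.2.1 B hB).2 hx)
    rw [Finset.mem_singleton]
    omega
  have := Finset.card_le_card h3
  rw [Finset.card_singleton] at this
  omega

theorem aN_two : aN 2 = 1 := by
  have h := aN_rec 0
  rw [Finset.sum_range_one, aN_zero, bN_rec 0, aN_zero, aN_one] at h
  simpa using h

theorem aN_three : aN 3 = 1 := by
  have h := aN_rec 1
  rw [Finset.sum_range_succ, Finset.sum_range_one, aN_zero, aN_one] at h
  rw [show (1:ℕ)+2-0 = 0+3 by omega, show (1:ℕ)+2-1 = 0+2 by omega] at h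
  rw [show (0:ℕ)+3 = 1+2 by omega, bN_rec 1, bN_rec 0, aN_zero, aN_one, aN_two] at h
  simpa using h

/-! ### the quadratic identity at the level of coefficients -/

theorem key (n : ℕ) : aN (n + 2) + aN (n + 1)
    = (∑ i ∈ range (n + 2), aN i * aN (n + 1 - i))
      + ∑ i ∈ range (n + 1), aN i * aN (n - i) := by
  have h2 : ∀ i ∈ range (n + 1),
      aN i * bN (n + 2 - i) = aN i * aN (n - i) + aN i * aN (n + 1 - i) := by
    intro i hi
    rw [mem_range] at hi
    rw [show n + 2 - i = (n - i) + 2 by omega, bN_rec, Nat.mul_add,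
      show n - i + 1 = n + 1 - i by omega]
  calc aN (n + 2) + aN (n + 1)
      = (∑ i ∈ range (n + 1), (aN i * aN (n - i) + aN i * aN (n + 1 - i))) + aN (n + 1) := by
        rw [aN_rec n, Finset.sum_congr rfl h2]
    _ = (∑ i ∈ range (n + 1), aN i * aN (n - i))
        + ((∑ i ∈ range (n + 1), aN i * aN (n + 1 - i)) + aN (n + 1) * aN 0) := by
        rw [Finset.sum_add_distrib, aN_zero, Nat.mul_one]
        ring
    _ = (∑ i ∈ range (n + 2), aN i * aN (n + 1 - i)) + ∑ i ∈ range (n + 1), aN i * aN (n - i) := by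
        rw [Finset.sum_range_succ (fun i => aN i * aN (n + 1 - i)) (n + 1),
          show n + 1 - (n + 1) = 0 by omega]
        ring

/-! ### power series -/

open PowerSeries

noncomputable def AQ : PowerSeries ℚ := PowerSeries.mk (fun n => (aN n : ℚ))

theorem coeff_AQ (n : ℕ) : (coeff (R := ℚ) n) AQ = (aN n : ℚ) := coeff_mk _ _

theorem coeff_AA (m : ℕ) :
    (coeff (R := ℚ) m) (AQ * AQ) = ((∑ i ∈ range (m + 1), aN i * aN (m - i) : ℕ) : ℚ) := by
  rw [PowerSeries.coeff_mul, Finset.Nat.sum_antidiagonal_eq_sum_range_succ_mk]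
  push_cast
  exact Finset.sum_congr rfl fun i _ => by rw [coeff_AQ, coeff_AQ]

theorem hQuad : ((1 : ℚ⟦X⟧) + X) * AQ = 1 + (X + X * X) * (AQ * AQ) := by
  have e1 : ((1 : ℚ⟦X⟧) + X) * AQ = AQ + X * AQ := by ring
  have e2 : (1 : ℚ⟦X⟧) + (X + X * X) * (AQ * AQ)
      = 1 + (X * (AQ * AQ) + X * (X * (AQ * AQ))) := by ring
  rw [e1, e2]
  ext n
  rcases n with _ | n
  · simp only [map_add, coeff_zero_X_mul, coeff_AQ, aN_zero, PowerSeries.coeff_zero_one]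
    norm_num
  rcases n with _ | n
  · simp only [map_add, coeff_succ_X_mul, coeff_zero_X_mul, coeff_AQ, coeff_AA,
      PowerSeries.coeff_one, aN_zero, aN_one, Finset.sum_range_one]
    norm_num [aN_zero, aN_one]
  · simp only [map_add, coeff_succ_X_mul, coeff_AQ, coeff_AA, PowerSeries.coeff_one]
    norm_num
    exact_mod_cast key n

theorem hS2 : (((1 : ℚ⟦X⟧) + X) - 2 * X * (1 + X) * AQ) * (((1 : ℚ⟦X⟧) + X) - 2 * X * (1 + X) * AQ)
    = 1 - 2 * X - 3 * (X * X) := by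
  linear_combination (-4 * X * ((1 : ℚ⟦X⟧) + X)) * hQuad

theorem two_ne_zero_PS : (2 : ℚ⟦X⟧) ≠ 0 := by
  intro h
  have := congrArg (constantCoeff (R := ℚ)) h
  simp only [map_ofNat, map_zero] at this
  norm_num at this

theorem dS_eq : (PowerSeries.derivative ℚ) (((1 : ℚ⟦X⟧) + X) - 2 * X * (1 + X) * AQ)
    = 1 - (2 + 4 * X) * AQ - (2 * X + 2 * (X * X)) * ((PowerSeries.derivative ℚ) AQ) := by
  have h1 : ((1 : ℚ⟦X⟧) + X) - 2 * X * (1 + X) * AQ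
      = (1 + X) - ((X * AQ + X * AQ) + (X * (X * AQ) + X * (X * AQ))) := by ring
  rw [h1]
  simp only [map_sub, map_add, Derivation.leibniz, PowerSeries.derivative_X,
    Derivation.map_one_eq_zero, smul_eq_mul, mul_one, one_mul, zero_add, add_zero]
  ring

theorem hSS' : (((1 : ℚ⟦X⟧) + X) - 2 * X * (1 + X) * AQ)
    * ((PowerSeries.derivative ℚ) (((1 : ℚ⟦X⟧) + X) - 2 * X * (1 + X) * AQ))
    = -1 - 3 * X := by
  have h := congrArg (PowerSeries.derivative ℚ) hS2
  rw [Derivation.leibniz] at h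
  have h2 : (PowerSeries.derivative ℚ) ((1 : ℚ⟦X⟧) - 2 * X - 3 * (X * X))
      = -2 - 6 * X := by
    have h3 : ((1 : ℚ⟦X⟧) - 2 * X - 3 * (X * X))
        = 1 - (X + X) - ((X * X) + (X * X) + (X * X)) := by ring
    rw [h3]
    simp only [map_sub, map_add, Derivation.leibniz, PowerSeries.derivative_X,
      Derivation.map_one_eq_zero, smul_eq_mul, mul_one, one_mul, zero_add, add_zero]
    ring
  rw [h2] at h
  simp only [smul_eq_mul] at h
  apply mul_left_cancel₀ two_ne_zero_PS
  linear_combination h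

theorem hODE : (1 - 2 * X - 3 * (X * X)) * ((PowerSeries.derivative ℚ)
      (((1 : ℚ⟦X⟧) + X) - 2 * X * (1 + X) * AQ))
    + (1 + 3 * X) * (((1 : ℚ⟦X⟧) + X) - 2 * X * (1 + X) * AQ) = 0 := by
  linear_combination (-((PowerSeries.derivative ℚ)
    (((1 : ℚ⟦X⟧) + X) - 2 * X * (1 + X) * AQ))) * hS2
    + (((1 : ℚ⟦X⟧) + X) - 2 * X * (1 + X) * AQ) * hSS'

theorem hW : X * (1 - 2 * X - 3 * (X * X)) * ((PowerSeries.derivative ℚ) AQ)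
    + (1 - 3 * (X * X)) * AQ - 1 = 0 := by
  have hW2 : ((-2 : ℚ⟦X⟧) * (1 + X)) * (X * (1 - 2 * X - 3 * (X * X))
      * ((PowerSeries.derivative ℚ) AQ) + (1 - 3 * (X * X)) * AQ - 1) = 0 := by
    have h := hODE
    rw [dS_eq] at h
    linear_combination h
  rcases mul_eq_zero.1 hW2 with h | h
  · exfalso
    have := congrArg (constantCoeff (R := ℚ)) h
    simp only [map_mul, map_add, map_neg, map_ofNat, map_one, constantCoeff_X, map_zero] at this
    norm_num at this
  · exact h

theorem recQ (m : ℕ) : ((m : ℚ) + 4) * (aN (m + 3) : ℚ)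
    = (2 * (m : ℚ) + 4) * (aN (m + 2) : ℚ) + (3 * (m : ℚ) + 6) * (aN (m + 1) : ℚ) := by
  have h0 := congrArg (coeff (R := ℚ) (m + 1 + 1 + 1)) hW
  have hexp : X * (1 - 2 * X - 3 * (X * X)) * ((PowerSeries.derivative ℚ) AQ)
      + (1 - 3 * (X * X)) * AQ - 1
      = (X * ((PowerSeries.derivative ℚ) AQ) + AQ)
        - X * (X * (((PowerSeries.derivative ℚ) AQ) + ((PowerSeries.derivative ℚ) AQ)
            + (AQ + AQ + AQ)))
        - X * (X * (X * (((PowerSeries.derivative ℚ) AQ) + ((PowerSeries.derivative ℚ) AQ)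
            + ((PowerSeries.derivative ℚ) AQ))))
        - 1 := by ring
  rw [hexp] at h0
  simp only [map_sub, map_add, coeff_succ_X_mul, PowerSeries.coeff_derivative, coeff_AQ,
    PowerSeries.coeff_one, map_zero] at h0
  norm_num at h0
  push_cast at h0 ⊢
  linear_combination h0

theorem recN (m : ℕ) : (m + 4) * aN (m + 3)
    = (2 * m + 4) * aN (m + 2) + (3 * m + 6) * aN (m + 1) := by
  have h := recQ m
  have : (((m + 4) * aN (m + 3) : ℕ) : ℚ)
      = (((2 * m + 4) * aN (m + 2) + (3 * m + 6) * aN (m + 1) : ℕ) : ℚ) := by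
    push_cast
    linear_combination h
  exact_mod_cast this


/-! ### transfer between `Fin n` partitions and `ℕ` partitions -/

theorem downBlock_image {n : ℕ} {B : Finset ℕ} (hB : B ⊆ range n) :
    (Finset.univ.filter (fun i : Fin n => (i : ℕ) ∈ B)).image Fin.val = B := by
  ext x
  simp only [Finset.mem_image, Finset.mem_filter, Finset.mem_univ, true_and]
  constructor
  · rintro ⟨i, hi, rfl⟩
    exact hi
  · intro hx
    have hxn : x < n := mem_range.1 (hB hx)
    exact ⟨⟨x, hxn⟩, hx, rfl⟩

theorem upBlock_down {n : ℕ} (B : Finset (Fin n)) :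
    Finset.univ.filter (fun i : Fin n => (i : ℕ) ∈ B.image Fin.val) = B := by
  ext i
  simp only [Finset.mem_filter, Finset.mem_univ, true_and, Finset.mem_image]
  constructor
  · rintro ⟨b, hb, hbi⟩
    rwa [Fin.val_injective hbi] at hb
  · intro hi
    exact ⟨i, hi, rfl⟩

theorem up_NRP {n : ℕ} {P : Finset (Finset (Fin n))} (h : IsRiordanPartition n P) :
    NRP n (P.image (fun B => B.image Fin.val)) := by
  obtain ⟨⟨hcov, hcard⟩, hnc⟩ := h
  refine ⟨?_, ?_, ?_⟩
  · intro x hx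
    rw [mem_range] at hx
    obtain ⟨B, ⟨hB, hxB⟩, hu⟩ := hcov ⟨x, hx⟩
    refine ⟨B.image Fin.val, ⟨Finset.mem_image_of_mem _ hB,
      Finset.mem_image_of_mem _ hxB⟩, ?_⟩
    rintro D ⟨hD, hxD⟩
    rw [Finset.mem_image] at hD
    obtain ⟨C, hC, rfl⟩ := hD
    rw [Finset.mem_image] at hxD
    obtain ⟨c, hc, hcx⟩ := hxD
    have hcx' : c = ⟨x, hx⟩ := Fin.ext hcx
    subst hcx'
    rw [hu C ⟨hC, hc⟩]
  · intro D hD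
    rw [Finset.mem_image] at hD
    obtain ⟨B, hB, rfl⟩ := hD
    refine ⟨?_, ?_⟩
    · rw [Finset.card_image_of_injective _ Fin.val_injective]
      exact hcard B hB
    · intro x hx
      rw [Finset.mem_image] at hx
      obtain ⟨i, -, rfl⟩ := hx
      exact mem_range.2 i.isLt
  · rintro D hD E hE hne ⟨i, j, k, l, h1, h2, h3, h4, h5, h6, h7⟩
    rw [Finset.mem_image] at hD hE
    obtain ⟨B, hB, rfl⟩ := hD
    obtain ⟨C, hC, rfl⟩ := hE
    rw [Finset.mem_image] at h4 h5 h6 h7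
    obtain ⟨bi, hbi, rfl⟩ := h4
    obtain ⟨bk, hbk, rfl⟩ := h5
    obtain ⟨bj, hbj, rfl⟩ := h6
    obtain ⟨bl, hbl, rfl⟩ := h7
    exact hnc ⟨bi, bj, bk, bl, h1, h2, h3, B, hB, C, hC,
      fun hBC => hne (by rw [hBC]), hbi, hbk, hbj, hbl⟩

theorem down_Riordan {n : ℕ} {Q : Finset (Finset ℕ)} (h : NRP n Q) :
    IsRiordanPartition n
      (Q.image (fun B => Finset.univ.filter (fun i : Fin n => (i : ℕ) ∈ B))) := by
  refine ⟨⟨?_, ?_⟩, ?_⟩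
  · intro i
    obtain ⟨B, ⟨hB, hiB⟩, hu⟩ := h.1 (i : ℕ) (mem_range.2 i.isLt)
    refine ⟨Finset.univ.filter (fun j : Fin n => (j : ℕ) ∈ B),
      ⟨Finset.mem_image_of_mem _ hB,
        Finset.mem_filter.2 ⟨Finset.mem_univ _, hiB⟩⟩, ?_⟩
    rintro D ⟨hD, hiD⟩
    rw [Finset.mem_image] at hD
    obtain ⟨C, hC, rfl⟩ := hD
    have hiC : (i : ℕ) ∈ C := (Finset.mem_filter.1 hiD).2
    rw [hu C ⟨hC, hiC⟩]
  · intro D hD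
    rw [Finset.mem_image] at hD
    obtain ⟨B, hB, rfl⟩ := hD
    have himg := downBlock_image (h.2.1 B hB).2
    calc 2 ≤ B.card := (h.2.1 B hB).1
      _ = _ := by
        have hc := Finset.card_image_of_injective
          (Finset.univ.filter (fun i : Fin n => (i : ℕ) ∈ B)) Fin.val_injective
        rw [himg] at hc
        exact hc
  · rintro ⟨i, j, k, l, h1, h2, h3, D, hD, E, hE, hne, h4, h5, h6, h7⟩
    rw [Finset.mem_image] at hD hE
    obtain ⟨B, hB, rfl⟩ := hD
    obtain ⟨C, hC, rfl⟩ := hE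
    have hBC : B ≠ C := fun hBCeq => hne (by rw [hBCeq])
    exact h.2.2 B hB C hC hBC ⟨(i : ℕ), (j : ℕ), (k : ℕ), (l : ℕ), h1, h2, h3,
      (Finset.mem_filter.1 h4).2, (Finset.mem_filter.1 h5).2,
      (Finset.mem_filter.1 h6).2, (Finset.mem_filter.1 h7).2⟩

theorem natCard_eq (n : ℕ) :
    Nat.card {P : Finset (Finset (Fin n)) // IsRiordanPartition n P} = aN n := by
  classical
  rw [Nat.card_eq_fintype_card, Fintype.card_subtype, aN]
  apply Finset.card_nbij' (fun P => P.image (fun B => B.image Fin.val))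
    (fun Q => Q.image (fun B => Finset.univ.filter (fun i : Fin n => (i : ℕ) ∈ B)))
  · intro P hP
    exact mem_NRPs.2 (up_NRP (Finset.mem_filter.1 hP).2)
  · intro Q hQ
    exact Finset.mem_filter.2 ⟨Finset.mem_univ _, down_Riordan (mem_NRPs.1 hQ)⟩
  · intro P hP
    beta_reduce
    rw [Finset.image_image]
    refine Eq.trans (Finset.image_congr ?_) Finset.image_id
    intro B hB
    exact upBlock_down B
  · intro Q hQ
    have hN := mem_NRPs.1 hQ
    beta_reduce
    rw [Finset.image_image]
    refine Eq.trans (Finset.image_congr ?_) Finset.image_id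
    intro B hB
    exact downBlock_image (hN.2.1 B hB).2

end Rio

theorem card_riordan_partitions
    (R : ℕ → ℕ) (hR2 : R 2 = 1) (hR3 : R 3 = 1)
    (hRrec : ∀ n, 4 ≤ n → (n + 1) * R n = (n - 1) * (2 * R (n - 1) + 3 * R (n - 2))) :
    ∀ n, 2 ≤ n →
      Nat.card {P : Finset (Finset (Fin n)) // IsRiordanPartition n P} = R n := by
  have hkey : ∀ n, 2 ≤ n → Rio.aN n = R n := by
    intro n
    induction n using Nat.strong_induction_on with
    | _ n ih =>
      intro hn
      by_cases h2 : n = 2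
      · subst h2
        rw [Rio.aN_two, hR2]
      by_cases h3 : n = 3
      · subst h3
        rw [Rio.aN_three, hR3]
      have h4 : 4 ≤ n := by omega
      obtain ⟨m, rfl⟩ : ∃ m, n = m + 3 := ⟨n - 3, by omega⟩
      have hrec := Rio.recN m
      have hR := hRrec (m + 3) (by omega)
      rw [show m + 3 - 1 = m + 2 by omega, show m + 3 - 2 = m + 1 by omega] at hR
      have e1 : Rio.aN (m + 2) = R (m + 2) := ih (m + 2) (by omega) (by omega)
      have e2 : Rio.aN (m + 1) = R (m + 1) := ih (m + 1) (by omega) (by omega)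
      have hmain : (m + 4) * Rio.aN (m + 3) = (m + 4) * R (m + 3) := by
        rw [hrec, e1, e2]
        calc (2 * m + 4) * R (m + 2) + (3 * m + 6) * R (m + 1)
            = (m + 3 - 1) * (2 * R (m + 2) + 3 * R (m + 1)) := by
              rw [show m + 3 - 1 = m + 2 by omega]; ring
          _ = (m + 3 + 1) * R (m + 3) := by
              rw [show m + 3 - 1 = m + 2 by omega]; exact hR.symm
          _ = (m + 4) * R (m + 3) := by ring_nf
      exact Nat.eq_of_mul_eq_mul_left (by omega) hmain
  intro n hn
  rw [Rio.natCard_eq, hkey n hn]
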